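/- Fix integers n ≥ 1 and m ≥ 0 and set d = m + 2n. Define 6×6 real matrices A and B and a 6×m real matrix D as follows: A has (2/d) in entries (2,1), (2,2), (3,1), (3,2) and zeros elsewhere; B has rows (1, 0, −1, 0, 0, 0), ((2−d)/d, 2/d, 0, −1, 0, 0), (2/d, (2−d)/d, 0, 0, −1, 0), (0, 1, 0, −1, 0, 0), (0, 0, 1, 0, −1, 0), (0, 0, 0, 1, 0, −1); D has every entry of rows 2 and 3 equal to 2/d and zeros elsewhere. Let δ be the (6n) × (m + 6n) real block matrix whose i-th block row (1 ≤ i ≤ n) is [D, A, …, A, B, A, …, A] with the block B in the i-th of the n loop-column positions. Then rank δ = 5n if m ≥ 1, and rank δ = 5n − 1 if m = 0. Consequently the kernel of δ has dimension m + n when m ≥ 1 and dimension n + 1 when m = 0, and the cokernel of δ has dimension n when m ≥ 1 and dimension n + 1 when m = 0. -/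

import Mathlib

open Matrix

/-- The 6×6 block `A`: entries `(2,1), (2,2), (3,1), (3,2)` (1-indexed) equal `2/d`,
all other entries zero. -/
noncomputable def Ablock (d : ℝ) : Matrix (Fin 6) (Fin 6) ℝ :=
  Matrix.of fun r c => if (r = 1 ∨ r = 2) ∧ (c = 0 ∨ c = 1) then 2 / d else 0

/-- The 6×6 block `B` with the rows listed in the statement. -/
noncomputable def Bblock (d : ℝ) : Matrix (Fin 6) (Fin 6) ℝ :=
  !![1, 0, -1, 0, 0, 0;
     (2 - d) / d, 2 / d, 0, -1, 0, 0;
     2 / d, (2 - d) / d, 0, 0, -1, 0;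
     0, 1, 0, -1, 0, 0;
     0, 0, 1, 0, -1, 0;
     0, 0, 0, 1, 0, -1]

/-- The 6×m block `D`: every entry of rows 2 and 3 (1-indexed) equals `2/d`,
all other entries zero. -/
noncomputable def Dblock (m : ℕ) (d : ℝ) : Matrix (Fin 6) (Fin m) ℝ :=
  Matrix.of fun r _ => if r = 1 ∨ r = 2 then 2 / d else 0

/-- The `(6n) × (m + 6n)` Čech coboundary matrix `δ` whose `i`-th block row is
`[D, A, …, A, B, A, …, A]` with the block `B` in the `i`-th of the `n` loop-column
positions, where `d = m + 2n`. -/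
noncomputable def cechCoboundary (n m : ℕ) :
    Matrix (Fin n × Fin 6) (Fin m ⊕ Fin n × Fin 6) ℝ :=
  Matrix.of fun p q =>
    match q with
    | Sum.inl j => Dblock m ((m : ℝ) + 2 * n) p.2 j
    | Sum.inr (i, s) =>
        if p.1 = i then Bblock ((m : ℝ) + 2 * n) p.2 s
        else Ablock ((m : ℝ) + 2 * n) p.2 s


namespace CechAux

noncomputable def Sv (n m : ℕ) (v : Fin m ⊕ Fin n × Fin 6 → ℝ) : ℝ :=
  (∑ j, v (Sum.inl j)) + ∑ i, (v (Sum.inr (i, 0)) + v (Sum.inr (i, 1)))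

lemma sum_ite_helper {n : ℕ} (i : Fin n) (f g : Fin n → ℝ) :
    ∑ i', (if i = i' then f i' else g i') = f i - g i + ∑ i', g i' := by
  have h : ∀ i' ∈ Finset.univ (α := Fin n), (if i = i' then f i' else g i') =
      (if i' = i then f i' - g i' else 0) + g i' := by
    intro i' _
    rcases eq_or_ne i' i with h | h
    · subst h; simp
    · rw [if_neg (Ne.symm h), if_neg h]; ring
  rw [Finset.sum_congr rfl h, Finset.sum_add_distrib, Finset.sum_ite_eq' Finset.univ i]
  simp

lemma cv5 {α : Type*} (a : α) (u : Fin 5 → α) : Matrix.vecCons a u (5 : Fin 6) = u 4 := rfl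
lemma cv4 {α : Type*} (a : α) (u : Fin 4 → α) : Matrix.vecCons a u (4 : Fin 5) = u 3 := rfl
lemma cv3 {α : Type*} (a : α) (u : Fin 3 → α) : Matrix.vecCons a u (3 : Fin 4) = u 2 := rfl
lemma cv2 {α : Type*} (a : α) (u : Fin 2 → α) : Matrix.vecCons a u (2 : Fin 3) = u 1 := rfl

lemma cons_val_five {α : Type*} (a b c d e f : α) : ![a,b,c,d,e,f] (5 : Fin 6) = f := rfl

lemma Asum (n m : ℕ) (d : ℝ) (v : Fin m ⊕ Fin n × Fin 6 → ℝ) (i' : Fin n) (r : Fin 6) :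
    ∑ s : Fin 6, Ablock d r s * v (Sum.inr (i', s)) =
      if r = 1 ∨ r = 2 then 2 / d * (v (Sum.inr (i', 0)) + v (Sum.inr (i', 1))) else 0 := by
  fin_cases r <;>
    simp [Ablock, Fin.sum_univ_six, cons_val_five, Fin.isValue] <;> ring

set_option maxHeartbeats 1000000 in
lemma mulVec_apply (n m : ℕ) (v : Fin m ⊕ Fin n × Fin 6 → ℝ) (i : Fin n) (r : Fin 6) :
    (cechCoboundary n m).mulVec v (i, r) =
      ![v (Sum.inr (i,0)) - v (Sum.inr (i,2)),
        2 / ((m:ℝ)+2*n) * Sv n m v - v (Sum.inr (i,0)) - v (Sum.inr (i,3)),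
        2 / ((m:ℝ)+2*n) * Sv n m v - v (Sum.inr (i,1)) - v (Sum.inr (i,4)),
        v (Sum.inr (i,1)) - v (Sum.inr (i,3)),
        v (Sum.inr (i,2)) - v (Sum.inr (i,4)),
        v (Sum.inr (i,3)) - v (Sum.inr (i,5))] r := by
  have hd : ((m : ℝ) + 2 * n) ≠ 0 := by
    have h1 : (1 : ℝ) ≤ (n : ℝ) := by exact_mod_cast i.pos
    have h2 : (0 : ℝ) ≤ (m : ℝ) := Nat.cast_nonneg m
    nlinarith
  set d : ℝ := (m : ℝ) + 2 * n with hdef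
  simp only [Matrix.mulVec, dotProduct, Fintype.sum_sum_type, Fintype.sum_prod_type]
  simp only [cechCoboundary, Matrix.of_apply]
  have hsplit : ∀ i' : Fin n, ∑ s : Fin 6,
      (if ((i, r) : Fin n × Fin 6).1 = i' then Bblock d r s else Ablock d r s)
        * v (Sum.inr (i', s)) =
      (if i = i' then ∑ s : Fin 6, Bblock d r s * v (Sum.inr (i', s))
       else ∑ s : Fin 6, Ablock d r s * v (Sum.inr (i', s))) := by
    intro i'
    split_ifs <;> rfl
  rw [Finset.sum_congr rfl fun i' _ => hsplit i', sum_ite_helper]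
  have hD : ∀ r : Fin 6, ∑ j, Dblock m d r j * v (Sum.inl j) =
      if r = 1 ∨ r = 2 then 2 / d * ∑ j, v (Sum.inl j) else 0 := by
    intro r
    by_cases h : r = 1 ∨ r = 2 <;>
      simp [Dblock, h, Finset.mul_sum]
  have hAsum : ∀ r : Fin 6, ∑ i', ∑ s : Fin 6, Ablock d r s * v (Sum.inr (i', s)) =
      if r = 1 ∨ r = 2 then
        2 / d * ∑ i', (v (Sum.inr (i', 0)) + v (Sum.inr (i', 1))) else 0 := by
    intro r
    rw [Finset.sum_congr rfl fun i' _ => Asum n m d v i' r]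
    by_cases h : r = 1 ∨ r = 2 <;> simp [h, Finset.mul_sum]
  rw [hD, hAsum, Asum]
  fin_cases r <;>
    simp only [Fin.isValue, Sv, Bblock, Fin.sum_univ_six, Matrix.cons_val_zero,
      Matrix.cons_val_one, Matrix.head_cons, Matrix.cons_val_two, Matrix.tail_cons,
      Matrix.cons_val_three, Matrix.cons_val_four, cons_val_five, Matrix.of_apply,
      Matrix.cons_val', Matrix.empty_val', Matrix.cons_val_fin_one, Matrix.head_fin_const,
      if_true, if_false] <;>
    simp (config := { decide := true }) [Fin.ext_iff, Sv, Matrix.vecHead, Matrix.vecTail,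
      Function.comp, cons_val_five, cv5, cv4, cv3, cv2] <;> (try field_simp) <;> ring

noncomputable def phiPos (n m : ℕ) :
    ((Fin m → ℝ) × (Fin n → ℝ)) →ₗ[ℝ] (Fin m ⊕ Fin n × Fin 6 → ℝ) where
  toFun p q :=
    match q with
    | Sum.inl j => p.1 j
    | Sum.inr (i, s) =>
        if s = 0 ∨ s = 2 ∨ s = 4 then p.2 i
        else 2 / (m : ℝ) * (∑ j, p.1 j) - p.2 i
  map_add' p q := by
    funext x
    rcases x with j | ⟨i, s⟩
    · rfl
    · show (if _ then _ else _) = _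
      by_cases h : s = 0 ∨ s = 2 ∨ s = 4 <;>
        simp [h, Finset.sum_add_distrib] <;> ring
  map_smul' c p := by
    have hT : (∑ j, (c • p).1 j) = c * ∑ j, p.1 j := by
      rw [Finset.mul_sum]; exact Finset.sum_congr rfl fun j _ => by simp
    funext x
    rcases x with j | ⟨i, s⟩
    · rfl
    · show (if s = 0 ∨ s = 2 ∨ s = 4 then (c • p).2 i
          else 2 / (m : ℝ) * (∑ j, (c • p).1 j) - (c • p).2 i) =
        c * (if s = 0 ∨ s = 2 ∨ s = 4 then p.2 i
          else 2 / (m : ℝ) * (∑ j, p.1 j) - p.2 i)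
      split_ifs with h
      · simp
      · rw [hT]; simp; ring

lemma phiPos_inl (n m : ℕ) (p) (j : Fin m) : phiPos n m p (Sum.inl j) = p.1 j := rfl

lemma phiPos_inr (n m : ℕ) (p) (i : Fin n) (s : Fin 6) :
    phiPos n m p (Sum.inr (i, s)) =
      if s = 0 ∨ s = 2 ∨ s = 4 then p.2 i else 2 / (m : ℝ) * (∑ j, p.1 j) - p.2 i := rfl

noncomputable def psiPos (n m : ℕ) :
    (Fin m ⊕ Fin n × Fin 6 → ℝ) →ₗ[ℝ] ((Fin m → ℝ) × (Fin n → ℝ)) where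
  toFun v := (fun j => v (Sum.inl j), fun i => v (Sum.inr (i, 0)))
  map_add' _ _ := rfl
  map_smul' _ _ := rfl

lemma Sv_phiPos (n m : ℕ) (p : (Fin m → ℝ) × (Fin n → ℝ)) :
    Sv n m (phiPos n m p) = (1 + 2 * n / m) * ∑ j, p.1 j := by
  have : ∀ i : Fin n, phiPos n m p (Sum.inr (i, 0)) + phiPos n m p (Sum.inr (i, 1)) =
      2 / (m:ℝ) * ∑ j, p.1 j := by
    intro i
    rw [phiPos_inr, phiPos_inr,
      if_pos (Or.inl rfl : (0 : Fin 6) = 0 ∨ (0 : Fin 6) = 2 ∨ (0 : Fin 6) = 4),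
      if_neg (by decide : ¬((1 : Fin 6) = 0 ∨ (1 : Fin 6) = 2 ∨ (1 : Fin 6) = 4))]
    ring
  rw [Sv, Finset.sum_congr rfl fun i _ => this i, Finset.sum_const, Finset.card_univ,
    Fintype.card_fin, nsmul_eq_mul]
  show (∑ j, p.1 j) + _ = _
  ring

lemma phiPos_mem_ker (n m : ℕ) (hm : 1 ≤ m) (p : (Fin m → ℝ) × (Fin n → ℝ)) :
    (cechCoboundary n m).mulVec (phiPos n m p) = 0 := by
  have hm' : (m : ℝ) ≠ 0 := Nat.cast_ne_zero.mpr (by omega)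
  funext x
  rcases x with ⟨i, r⟩
  have hd : ((m : ℝ) + 2 * n) ≠ 0 := by
    have h1 : (1 : ℝ) ≤ (m : ℝ) := by exact_mod_cast hm
    have h2 : (0 : ℝ) ≤ (n : ℝ) := Nat.cast_nonneg n
    nlinarith
  rw [mulVec_apply, Sv_phiPos]
  fin_cases r <;>
    simp (config := { decide := true }) [phiPos_inr, Pi.zero_apply, cv5, cv4, cv3, cv2] <;>
    field_simp <;> ring

lemma phiPos_psiPos (n m : ℕ) (hm : 1 ≤ m) (v : Fin m ⊕ Fin n × Fin 6 → ℝ)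
    (hv : (cechCoboundary n m).mulVec v = 0) : phiPos n m (psiPos n m v) = v := by
  have hm' : (m : ℝ) ≠ 0 := Nat.cast_ne_zero.mpr (by omega)
  funext x
  rcases x with j | ⟨i, s⟩
  · rfl
  have hd : ((m : ℝ) + 2 * n) ≠ 0 := by
    have h1 : (1 : ℝ) ≤ (m : ℝ) := by exact_mod_cast hm
    have h2 : (0 : ℝ) ≤ (n : ℝ) := Nat.cast_nonneg n
    nlinarith
  have E : ∀ (i : Fin n) (r : Fin 6), (cechCoboundary n m).mulVec v (i, r) = 0 :=
    fun i r => by rw [hv]; rfl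
  have e0 : ∀ i : Fin n, v (Sum.inr (i, 2)) = v (Sum.inr (i, 0)) := by
    intro i; have h := E i 0; rw [mulVec_apply] at h
    simp only [Matrix.cons_val_zero] at h; linarith
  have e3 : ∀ i : Fin n, v (Sum.inr (i, 3)) = v (Sum.inr (i, 1)) := by
    intro i; have h := E i 3; rw [mulVec_apply] at h
    simp only [Matrix.cons_val_three, Matrix.head_cons, Matrix.tail_cons] at h; linarith
  have e4 : ∀ i : Fin n, v (Sum.inr (i, 4)) = v (Sum.inr (i, 0)) := by
    intro i; have h := E i 4; rw [mulVec_apply] at h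
    simp only [Matrix.cons_val_four, Matrix.head_cons, Matrix.tail_cons,
      Matrix.cons_val_zero, Matrix.cons_val_one] at h
    rw [← e0 i]; linarith
  have e5 : ∀ i : Fin n, v (Sum.inr (i, 5)) = v (Sum.inr (i, 1)) := by
    intro i; have h := E i 5; rw [mulVec_apply] at h
    simp only [cv5, cv4, cv3, cv2, Matrix.head_cons, Matrix.tail_cons,
      Matrix.cons_val_zero, Matrix.cons_val_one] at h
    rw [← e3 i]; linarith
  have key : ∀ i : Fin n, v (Sum.inr (i, 0)) + v (Sum.inr (i, 1)) =
      2 / ((m : ℝ) + 2 * n) * Sv n m v := by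
    intro i; have h := E i 1; rw [mulVec_apply] at h
    simp only [Matrix.cons_val_one, Matrix.head_cons, Matrix.cons_val_zero] at h
    rw [← e3 i]; linarith
  have hsum : (m : ℝ) * Sv n m v = ((m : ℝ) + 2 * n) * ∑ j, v (Sum.inl j) := by
    have h1 : Sv n m v = (∑ j, v (Sum.inl j)) +
        (n : ℝ) * (2 / ((m : ℝ) + 2 * n) * Sv n m v) := by
      conv_lhs => rw [Sv]
      rw [Finset.sum_congr rfl fun i _ => key i, Finset.sum_const, Finset.card_univ,
        Fintype.card_fin, nsmul_eq_mul]
    field_simp at h1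
    linarith
  have key2 : ∀ i : Fin n, v (Sum.inr (i, 0)) + v (Sum.inr (i, 1)) =
      2 / (m : ℝ) * ∑ j, v (Sum.inl j) := by
    intro i
    rw [key i]
    rw [div_mul_eq_mul_div, div_mul_eq_mul_div, div_eq_div_iff hd hm']
    nlinarith [hsum]
  have hps0 : ∀ i : Fin n, (psiPos n m v).2 i = v (Sum.inr (i, 0)) := fun i => rfl
  have hps1 : (∑ j, (psiPos n m v).1 j) = ∑ j, v (Sum.inl j) := rfl
  fin_cases s <;> rw [phiPos_inr] <;>
    simp (config := { decide := true }) only [hps0, hps1, if_true, if_false,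
      ite_true, ite_false]
  · rfl
  · show _ = v (Sum.inr (i, 1)); have := key2 i; linarith
  · show _ = v (Sum.inr (i, 2)); exact (e0 i).symm
  · show _ = v (Sum.inr (i, 3)); rw [e3 i]; have := key2 i; linarith
  · show _ = v (Sum.inr (i, 4)); exact (e4 i).symm
  · show _ = v (Sum.inr (i, 5)); rw [e5 i]; have := key2 i; linarith

lemma psiPos_phiPos (n m : ℕ) (p : (Fin m → ℝ) × (Fin n → ℝ)) :
    psiPos n m (phiPos n m p) = p := by
  refine Prod.ext (funext fun j => rfl) (funext fun i => ?_)
  show phiPos n m p (Sum.inr (i, 0)) = p.2 i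
  rw [phiPos_inr, if_pos (Or.inl rfl)]

lemma kerdim_pos (n m : ℕ) (hm : 1 ≤ m) :
    Module.finrank ℝ (LinearMap.ker (Matrix.toLin' (cechCoboundary n m))) = m + n := by
  have hmem : ∀ p : (Fin m → ℝ) × (Fin n → ℝ),
      phiPos n m p ∈ LinearMap.ker (Matrix.toLin' (cechCoboundary n m)) := by
    intro p
    rw [LinearMap.mem_ker, Matrix.toLin'_apply]
    exact phiPos_mem_ker n m hm p
  let f : ((Fin m → ℝ) × (Fin n → ℝ)) →ₗ[ℝ]
      LinearMap.ker (Matrix.toLin' (cechCoboundary n m)) :=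
    (phiPos n m).codRestrict _ hmem
  let g : (LinearMap.ker (Matrix.toLin' (cechCoboundary n m))) →ₗ[ℝ]
      ((Fin m → ℝ) × (Fin n → ℝ)) :=
    (psiPos n m).comp (LinearMap.ker (Matrix.toLin' (cechCoboundary n m))).subtype
  have e : (LinearMap.ker (Matrix.toLin' (cechCoboundary n m))) ≃ₗ[ℝ]
      ((Fin m → ℝ) × (Fin n → ℝ)) := by
    refine LinearEquiv.ofLinear g f ?_ ?_
    · apply LinearMap.ext; intro p
      show psiPos n m (phiPos n m p) = p
      exact psiPos_phiPos n m p
    · apply LinearMap.ext; intro v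
      have hv : (cechCoboundary n m).mulVec v.1 = 0 := by
        have h2 := v.2
        rwa [LinearMap.mem_ker, Matrix.toLin'_apply] at h2
      apply Subtype.ext
      show phiPos n m (psiPos n m v.1) = v.1
      exact phiPos_psiPos n m hm v.1 hv
  rw [e.finrank_eq, Module.finrank_prod, Module.finrank_fintype_fun_eq_card,
    Module.finrank_fintype_fun_eq_card, Fintype.card_fin, Fintype.card_fin]

noncomputable def phiZero (n : ℕ) :
    ((Fin n → ℝ) × ℝ) →ₗ[ℝ] (Fin 0 ⊕ Fin n × Fin 6 → ℝ) where
  toFun p q :=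
    match q with
    | Sum.inl j => 0
    | Sum.inr (i, s) => if s = 0 ∨ s = 2 ∨ s = 4 then p.1 i else p.2 - p.1 i
  map_add' p q := by
    funext x
    rcases x with j | ⟨i, s⟩
    · show (0 : ℝ) = 0 + 0; ring
    · show (if _ then _ else _) = _
      by_cases h : s = 0 ∨ s = 2 ∨ s = 4 <;> simp [h] <;> ring
  map_smul' c p := by
    funext x
    rcases x with j | ⟨i, s⟩
    · show (0 : ℝ) = c * 0; ring
    · show (if s = 0 ∨ s = 2 ∨ s = 4 then (c • p).1 i else (c • p).2 - (c • p).1 i) =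
        c * (if s = 0 ∨ s = 2 ∨ s = 4 then p.1 i else p.2 - p.1 i)
      split_ifs with h
      · simp
      · simp; ring

lemma phiZero_inr (n : ℕ) (p) (i : Fin n) (s : Fin 6) :
    phiZero n p (Sum.inr (i, s)) =
      if s = 0 ∨ s = 2 ∨ s = 4 then p.1 i else p.2 - p.1 i := rfl

noncomputable def psiZero (n : ℕ) (hn : 0 < n) :
    (Fin 0 ⊕ Fin n × Fin 6 → ℝ) →ₗ[ℝ] ((Fin n → ℝ) × ℝ) where
  toFun v := (fun i => v (Sum.inr (i, 0)),
    v (Sum.inr (⟨0, hn⟩, 0)) + v (Sum.inr (⟨0, hn⟩, 1)))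
  map_add' u w := by
    refine Prod.ext rfl ?_
    show (u + w) (Sum.inr (⟨0, hn⟩, 0)) + (u + w) (Sum.inr (⟨0, hn⟩, 1)) = _
    show _ = (u (Sum.inr (⟨0, hn⟩, 0)) + u (Sum.inr (⟨0, hn⟩, 1))) +
      (w (Sum.inr (⟨0, hn⟩, 0)) + w (Sum.inr (⟨0, hn⟩, 1)))
    simp [Pi.add_apply]; ring
  map_smul' c v := by
    refine Prod.ext rfl ?_
    show c * _ + c * _ = c * _
    ring

lemma Sv_phiZero (n : ℕ) (p : (Fin n → ℝ) × ℝ) :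
    Sv n 0 (phiZero n p) = (n : ℝ) * p.2 := by
  have h : ∀ i : Fin n, phiZero n p (Sum.inr (i, 0)) + phiZero n p (Sum.inr (i, 1)) = p.2 := by
    intro i
    rw [phiZero_inr, phiZero_inr,
      if_pos (Or.inl rfl : (0 : Fin 6) = 0 ∨ (0 : Fin 6) = 2 ∨ (0 : Fin 6) = 4),
      if_neg (by decide : ¬((1 : Fin 6) = 0 ∨ (1 : Fin 6) = 2 ∨ (1 : Fin 6) = 4))]
    ring
  rw [Sv, Finset.sum_congr rfl fun i _ => h i, Finset.sum_const, Finset.card_univ,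
    Fintype.card_fin, nsmul_eq_mul]
  simp

lemma phiZero_mem_ker (n : ℕ) (hn : 1 ≤ n) (p : (Fin n → ℝ) × ℝ) :
    (cechCoboundary n 0).mulVec (phiZero n p) = 0 := by
  funext x
  rcases x with ⟨i, r⟩
  have hd : ((0 : ℕ) : ℝ) + 2 * n ≠ 0 := by
    have h1 : (1 : ℝ) ≤ (n : ℝ) := by exact_mod_cast hn
    nlinarith
  rw [mulVec_apply, Sv_phiZero]
  fin_cases r <;>
    simp (config := { decide := true }) [phiZero_inr, Pi.zero_apply, cv5, cv4, cv3, cv2] <;>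
    field_simp <;> ring

lemma phiZero_psiZero (n : ℕ) (hn : 0 < n) (v : Fin 0 ⊕ Fin n × Fin 6 → ℝ)
    (hv : (cechCoboundary n 0).mulVec v = 0) : phiZero n (psiZero n hn v) = v := by
  have hd : ((0 : ℕ) : ℝ) + 2 * n ≠ 0 := by
    have h1 : (1 : ℝ) ≤ (n : ℝ) := by exact_mod_cast hn
    nlinarith
  funext x
  rcases x with j | ⟨i, s⟩
  · exact j.elim0
  have E : ∀ (i : Fin n) (r : Fin 6), (cechCoboundary n 0).mulVec v (i, r) = 0 :=
    fun i r => by rw [hv]; rfl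
  have e0 : ∀ i : Fin n, v (Sum.inr (i, 2)) = v (Sum.inr (i, 0)) := by
    intro i; have h := E i 0; rw [mulVec_apply] at h
    simp only [Matrix.cons_val_zero] at h; linarith
  have e3 : ∀ i : Fin n, v (Sum.inr (i, 3)) = v (Sum.inr (i, 1)) := by
    intro i; have h := E i 3; rw [mulVec_apply] at h
    simp only [Matrix.cons_val_three, Matrix.head_cons, Matrix.tail_cons] at h; linarith
  have e4 : ∀ i : Fin n, v (Sum.inr (i, 4)) = v (Sum.inr (i, 0)) := by
    intro i; have h := E i 4; rw [mulVec_apply] at h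
    simp only [Matrix.cons_val_four, Matrix.head_cons, Matrix.tail_cons,
      Matrix.cons_val_zero, Matrix.cons_val_one] at h
    rw [← e0 i]; linarith
  have e5 : ∀ i : Fin n, v (Sum.inr (i, 5)) = v (Sum.inr (i, 1)) := by
    intro i; have h := E i 5; rw [mulVec_apply] at h
    simp only [cv5, cv4, cv3, cv2, Matrix.head_cons, Matrix.tail_cons,
      Matrix.cons_val_zero, Matrix.cons_val_one] at h
    rw [← e3 i]; linarith
  have key : ∀ i : Fin n, v (Sum.inr (i, 0)) + v (Sum.inr (i, 1)) =
      2 / (((0 : ℕ) : ℝ) + 2 * n) * Sv n 0 v := by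
    intro i; have h := E i 1; rw [mulVec_apply] at h
    simp only [Matrix.cons_val_one, Matrix.head_cons, Matrix.cons_val_zero] at h
    rw [← e3 i]; linarith
  have key2 : ∀ i : Fin n, v (Sum.inr (i, 0)) + v (Sum.inr (i, 1)) =
      v (Sum.inr (⟨0, hn⟩, 0)) + v (Sum.inr (⟨0, hn⟩, 1)) := by
    intro i; rw [key i, key ⟨0, hn⟩]
  have hps0 : ∀ i : Fin n, (psiZero n hn v).1 i = v (Sum.inr (i, 0)) := fun i => rfl
  have hps1 : (psiZero n hn v).2 = v (Sum.inr (⟨0, hn⟩, 0)) + v (Sum.inr (⟨0, hn⟩, 1)) := rfl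
  fin_cases s <;> rw [phiZero_inr] <;>
    simp (config := { decide := true }) only [hps0, hps1, if_true, if_false,
      ite_true, ite_false]
  · rfl
  · show _ = v (Sum.inr (i, 1)); have := key2 i; linarith
  · show _ = v (Sum.inr (i, 2)); exact (e0 i).symm
  · show _ = v (Sum.inr (i, 3)); rw [e3 i]; have := key2 i; linarith
  · show _ = v (Sum.inr (i, 4)); exact (e4 i).symm
  · show _ = v (Sum.inr (i, 5)); rw [e5 i]; have := key2 i; linarith

lemma psiZero_phiZero (n : ℕ) (hn : 0 < n) (p : (Fin n → ℝ) × ℝ) :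
    psiZero n hn (phiZero n p) = p := by
  refine Prod.ext (funext fun i => ?_) ?_
  · show phiZero n p (Sum.inr (i, 0)) = p.1 i
    rw [phiZero_inr, if_pos (Or.inl rfl)]
  · show phiZero n p (Sum.inr (⟨0, hn⟩, 0)) + phiZero n p (Sum.inr (⟨0, hn⟩, 1)) = p.2
    rw [phiZero_inr, phiZero_inr,
      if_pos (Or.inl rfl : (0 : Fin 6) = 0 ∨ (0 : Fin 6) = 2 ∨ (0 : Fin 6) = 4),
      if_neg (by decide : ¬((1 : Fin 6) = 0 ∨ (1 : Fin 6) = 2 ∨ (1 : Fin 6) = 4))]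
    ring

lemma kerdim_zero (n : ℕ) (hn : 1 ≤ n) :
    Module.finrank ℝ (LinearMap.ker (Matrix.toLin' (cechCoboundary n 0))) = n + 1 := by
  have hmem : ∀ p : (Fin n → ℝ) × ℝ,
      phiZero n p ∈ LinearMap.ker (Matrix.toLin' (cechCoboundary n 0)) := by
    intro p
    rw [LinearMap.mem_ker, Matrix.toLin'_apply]
    exact phiZero_mem_ker n hn p
  let f : ((Fin n → ℝ) × ℝ) →ₗ[ℝ] LinearMap.ker (Matrix.toLin' (cechCoboundary n 0)) :=
    (phiZero n).codRestrict _ hmem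
  let g : (LinearMap.ker (Matrix.toLin' (cechCoboundary n 0))) →ₗ[ℝ] ((Fin n → ℝ) × ℝ) :=
    (psiZero n hn).comp (LinearMap.ker (Matrix.toLin' (cechCoboundary n 0))).subtype
  have e : (LinearMap.ker (Matrix.toLin' (cechCoboundary n 0))) ≃ₗ[ℝ] ((Fin n → ℝ) × ℝ) := by
    refine LinearEquiv.ofLinear g f ?_ ?_
    · apply LinearMap.ext; intro p
      show psiZero n hn (phiZero n p) = p
      exact psiZero_phiZero n hn p
    · apply LinearMap.ext; intro v
      have hv : (cechCoboundary n 0).mulVec v.1 = 0 := by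
        have h2 := v.2
        rwa [LinearMap.mem_ker, Matrix.toLin'_apply] at h2
      apply Subtype.ext
      show phiZero n (psiZero n hn v.1) = v.1
      exact phiZero_psiZero n hn v.1 hv
  rw [e.finrank_eq, Module.finrank_prod, Module.finrank_fintype_fun_eq_card,
    Fintype.card_fin, Module.finrank_self]

end CechAux

/-- The Čech coboundary `δ` of the transmission line sheaf on the one-vertex graph with
`m` open edges and `n` resonant loops has rank `5n` when `m ≥ 1` and `5n − 1` when `m = 0`.
Consequently its kernel has dimension `m + n` (resp. `n + 1`) and its cokernel has
dimension `n` (resp. `n + 1`). -/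
theorem cechCoboundary_rank_ker_coker (n m : ℕ) (hn : 1 ≤ n) :
    ((cechCoboundary n m).rank = if 1 ≤ m then 5 * n else 5 * n - 1) ∧
    (Module.finrank ℝ (LinearMap.ker (Matrix.toLin' (cechCoboundary n m))) =
      if 1 ≤ m then m + n else n + 1) ∧
    (Module.finrank ℝ
        ((Fin n × Fin 6 → ℝ) ⧸ LinearMap.range (Matrix.toLin' (cechCoboundary n m))) =
      if 1 ≤ m then n else n + 1) := by
  classical
  have hker : Module.finrank ℝ (LinearMap.ker (Matrix.toLin' (cechCoboundary n m))) =
      if 1 ≤ m then m + n else n + 1 := by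
    rcases Nat.eq_zero_or_pos m with hm | hm
    · subst hm
      rw [if_neg (by omega)]
      exact CechAux.kerdim_zero n hn
    · rw [if_pos (show 1 ≤ m from hm)]
      exact CechAux.kerdim_pos n m hm
  have hdom : Module.finrank ℝ (Fin m ⊕ Fin n × Fin 6 → ℝ) = m + 6 * n := by
    rw [Module.finrank_fintype_fun_eq_card, Fintype.card_sum, Fintype.card_prod,
      Fintype.card_fin, Fintype.card_fin, Fintype.card_fin]
    ring
  have hcod : Module.finrank ℝ (Fin n × Fin 6 → ℝ) = 6 * n := by
    rw [Module.finrank_fintype_fun_eq_card, Fintype.card_prod, Fintype.card_fin,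
      Fintype.card_fin]
    ring
  have hrange : (cechCoboundary n m).rank =
      Module.finrank ℝ (LinearMap.range (Matrix.toLin' (cechCoboundary n m))) := by
    rw [Matrix.rank, Matrix.toLin'_apply']
  have h1 : Module.finrank ℝ (LinearMap.range (Matrix.toLin' (cechCoboundary n m))) +
      Module.finrank ℝ (LinearMap.ker (Matrix.toLin' (cechCoboundary n m))) = m + 6 * n := by
    rw [LinearMap.finrank_range_add_finrank_ker]
    exact hdom
  have h2 : Module.finrank ℝ
        ((Fin n × Fin 6 → ℝ) ⧸ LinearMap.range (Matrix.toLin' (cechCoboundary n m))) +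
      Module.finrank ℝ (LinearMap.range (Matrix.toLin' (cechCoboundary n m))) = 6 * n := by
    rw [Submodule.finrank_quotient_add_finrank]
    exact hcod
  refine ⟨?_, hker, ?_⟩
  · rw [hrange]
    split_ifs at hker ⊢ with h <;> omega
  · split_ifs at hker ⊢ with h <;> omega
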